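/- In the Lie algebra of derivations on the Danielewski surface, [xⁿW, zW] = x^{n+1}W and [yⁿV, zV] = y^{n+1}V for all n ≥ 0. Consequently the Lie algebra generated by V, W, zV, zW contains yⁿV and xⁿW for all n ≥ 0. -/

import Mathlib

open Polynomial

set_option synthInstance.maxHeartbeats 1000000
set_option maxHeartbeats 1000000

noncomputable section

/-- Coordinate ring of the Danielewski surface `x y = p(z)`. -/
abbrev DS (p : Polynomial ℂ) : Type :=
  MvPolynomial (Fin 3) ℂ ⧸
    Ideal.span ({MvPolynomial.X 0 * MvPolynomial.X 1 -
      Polynomial.aeval (MvPolynomial.X 2) p} : Set (MvPolynomial (Fin 3) ℂ))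

def dsX (p : Polynomial ℂ) : DS p := Ideal.Quotient.mk _ (MvPolynomial.X 0)
def dsY (p : Polynomial ℂ) : DS p := Ideal.Quotient.mk _ (MvPolynomial.X 1)
def dsZ (p : Polynomial ℂ) : DS p := Ideal.Quotient.mk _ (MvPolynomial.X 2)

lemma lie_smul_smul {R A : Type*} [CommRing R] [CommRing A] [Algebra R A]
    (D : Derivation R A A) (f g : A) :
    ⁅f • D, g • D⁆ = (f * D g - g * D f) • D := by
  ext a
  simp only [Derivation.commutator_apply, Derivation.smul_apply, Derivation.leibniz,
    smul_eq_mul, Derivation.sub_apply]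
  ring

/-- `[xⁿW, zW] = x^(n+1)W`, `[yⁿV, zV] = y^(n+1)V`, and the Lie
algebra generated by `V, W, zV, zW` contains `yⁿV` and `xⁿW` for all `n ≥ 0`. -/
theorem lie_span_contains_powers (p : Polynomial ℂ)
    (V W : Derivation ℂ (DS p) (DS p))
    (hVx : V (dsX p) = Polynomial.aeval (dsZ p) (derivative p))
    (hVy : V (dsY p) = 0) (hVz : V (dsZ p) = dsY p)
    (hWx : W (dsX p) = 0)
    (hWy : W (dsY p) = Polynomial.aeval (dsZ p) (derivative p))
    (hWz : W (dsZ p) = dsX p) :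
    (∀ n : ℕ, ⁅(dsX p ^ n) • W, dsZ p • W⁆ = (dsX p ^ (n+1)) • W) ∧
    (∀ n : ℕ, ⁅(dsY p ^ n) • V, dsZ p • V⁆ = (dsY p ^ (n+1)) • V) ∧
    (∀ n : ℕ, (dsY p ^ n) • V ∈
      LieSubalgebra.lieSpan ℂ (Derivation ℂ (DS p) (DS p))
        {V, W, dsZ p • V, dsZ p • W}) ∧
    (∀ n : ℕ, (dsX p ^ n) • W ∈
      LieSubalgebra.lieSpan ℂ (Derivation ℂ (DS p) (DS p))
        {V, W, dsZ p • V, dsZ p • W}) := by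
  have hW : ∀ n : ℕ, ⁅(dsX p ^ n) • W, dsZ p • W⁆ = (dsX p ^ (n+1)) • W := by
    intro n
    rw [lie_smul_smul, hWz, Derivation.leibniz_pow, hWx, smul_zero, smul_zero, mul_zero,
      sub_zero, ← pow_succ]
  have hV : ∀ n : ℕ, ⁅(dsY p ^ n) • V, dsZ p • V⁆ = (dsY p ^ (n+1)) • V := by
    intro n
    rw [lie_smul_smul, hVz, Derivation.leibniz_pow, hVy, smul_zero, smul_zero, mul_zero,
      sub_zero, ← pow_succ]
  refine ⟨hW, hV, ?_, ?_⟩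
  · intro n
    induction n with
    | zero =>
      simpa using LieSubalgebra.subset_lieSpan (by simp : V ∈ _)
    | succ n ih =>
      rw [← hV n]
      exact LieSubalgebra.lie_mem _ ih
        (LieSubalgebra.subset_lieSpan (by simp : dsZ p • V ∈ _))
  · intro n
    induction n with
    | zero =>
      rw [pow_zero, one_smul]
      exact LieSubalgebra.subset_lieSpan (Set.mem_insert_of_mem _ (Set.mem_insert _ _) : W ∈ _)
    | succ n ih =>
      rw [← hW n]
      exact LieSubalgebra.lie_mem _ ih
        (LieSubalgebra.subset_lieSpan (Set.mem_insert_of_mem _ (Set.mem_insert_of_mem _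
          (Set.mem_insert_of_mem _ (Set.mem_singleton _))) : dsZ p • W ∈ _))
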